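/- Under the assumptions of the preceding law-of-large-numbers statement, the acceptance probability p_n = min(1, exp(h_n)) converges almost surely to 1 if f_σ(z) > 0 and to 0 if f_σ(z) < 0. -/

import Mathlib

open MeasureTheory ProbabilityTheory Filter

/-- a.e.-equal modification preserves joint independence. -/
lemma iIndepFun_ae_eq' {ι Ω : Type*} [MeasurableSpace Ω] {μ : Measure Ω}
    {β : ι → Type*} {mβ : ∀ i, MeasurableSpace (β i)} {f g : ∀ i, Ω → β i}
    (h : iIndepFun f μ) (hfg : ∀ i, f i =ᵐ[μ] g i) : iIndepFun g μ := by
  rw [iIndepFun_iff_measure_inter_preimage_eq_mul] at h ⊢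
  intro S sets hsets
  have hS : ∀ᵐ ω ∂μ, ∀ i ∈ S, f i ω = g i ω := by
    have := (MeasureTheory.ae_ball_iff S.countable_toSet).2
      (fun i (_ : i ∈ (S : Set ι)) => hfg i)
    filter_upwards [this] with ω hω i hi using hω i hi
  have h1 : μ (⋂ i ∈ S, g i ⁻¹' sets i) = μ (⋂ i ∈ S, f i ⁻¹' sets i) := by
    apply measure_congr
    rw [Filter.eventuallyEq_set]
    filter_upwards [hS] with ω hω
    simp only [Set.mem_iInter, Set.mem_preimage]
    exact ⟨fun hmem i hi => (hω i hi) ▸ hmem i hi, fun hmem i hi => (hω i hi).symm ▸ hmem i hi⟩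
  have h2 : ∀ i ∈ S, μ (g i ⁻¹' sets i) = μ (f i ⁻¹' sets i) := by
    intro i _
    apply measure_congr
    rw [Filter.eventuallyEq_set]
    filter_upwards [hfg i] with ω hω
    simp [Set.mem_preimage, hω]
  rw [h1, Finset.prod_congr rfl h2]
  exact h S hsets


lemma det_tendsto_atTop {u : ℕ → ℝ} {c : ℝ} (hc : 0 < c)
    (h : Tendsto (fun n : ℕ => u n / n) atTop (nhds c)) : Tendsto u atTop atTop := by
  have h1 : Tendsto (fun n : ℕ => (n : ℝ) * (u n / n)) atTop atTop :=
    Tendsto.atTop_mul_pos hc tendsto_natCast_atTop_atTop h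
  apply h1.congr'
  filter_upwards [eventually_ge_atTop 1] with n hn
  have : (n : ℝ) ≠ 0 := Nat.cast_ne_zero.2 (by omega)
  field_simp

lemma det_tendsto_atBot {u : ℕ → ℝ} {c : ℝ} (hc : c < 0)
    (h : Tendsto (fun n : ℕ => u n / n) atTop (nhds c)) : Tendsto u atTop atBot := by
  have h1 : Tendsto (fun n : ℕ => (n : ℝ) * (u n / n)) atTop atBot :=
    Tendsto.atTop_mul_neg hc tendsto_natCast_atTop_atTop h
  apply h1.congr'
  filter_upwards [eventually_ge_atTop 1] with n hn
  have : (n : ℝ) ≠ 0 := Nat.cast_ne_zero.2 (by omega)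
  field_simp

lemma det_min_one {u : ℕ → ℝ} {c : ℝ} (hc : 0 < c)
    (h : Tendsto (fun n : ℕ => u n / n) atTop (nhds c)) :
    Tendsto (fun n : ℕ => min 1 (Real.exp (u n))) atTop (nhds 1) := by
  have h1 : Tendsto (fun n => Real.exp (u n)) atTop atTop :=
    Real.tendsto_exp_atTop.comp (det_tendsto_atTop hc h)
  apply tendsto_const_nhds.congr'
  filter_upwards [h1.eventually_ge_atTop 1] with n hn
  exact (min_eq_left hn).symm

lemma det_min_zero {u : ℕ → ℝ} {c : ℝ} (hc : c < 0)
    (h : Tendsto (fun n : ℕ => u n / n) atTop (nhds c)) :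
    Tendsto (fun n : ℕ => min 1 (Real.exp (u n))) atTop (nhds 0) := by
  have h1 : Tendsto (fun n => Real.exp (u n)) atTop (nhds 0) :=
    Real.tendsto_exp_atBot.comp (det_tendsto_atBot hc h)
  have := tendsto_const_nhds (x := (1:ℝ)) (f := atTop (α := ℕ)) |>.min h1
  simpa using this


theorem ratio_limit_meas {Ω : Type*} [MeasurableSpace Ω] (μ : Measure Ω)
    [IsProbabilityMeasure μ] (X Y : ℕ → Ω → ℝ) (m σ : ℝ) (z : ℝ)
    (hmX : ∀ i, Measurable (X i)) (hmY : ∀ i, Measurable (Y i))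
    (hindep : iIndepFun
      (fun p : Bool × ℕ => if p.1 then X p.2 else Y p.2) μ)
    (hXid : ∀ i, Measure.map (X i) μ = Measure.map (X 0) μ)
    (hYid : ∀ i, Measure.map (Y i) μ = Measure.map (Y 0) μ)
    (hX2 : ∀ i, MemLp (X i) 2 μ) (hY2 : ∀ i, MemLp (Y i) 2 μ)
    (hXm : ∀ i, ∫ ω, X i ω ∂μ = m) (hYm : ∀ i, ∫ ω, Y i ω ∂μ = m)
    (hXv : ∀ i, variance (X i) μ = σ^2) (hYv : ∀ i, variance (Y i) μ = σ^2) :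
    ∀ᵐ ω ∂μ, Tendsto
      (fun n : ℕ => (((n : ℝ) - 1) * Real.log z
            - (1/2) * ∑ i ∈ Finset.range n, (z * X i ω + (1 - z) * Y i ω)^2
            + (1/2) * ∑ i ∈ Finset.range n, (X i ω)^2) / n)
      atTop (nhds (Real.log z - σ^2 * z * (z - 1))) := by
  classical
  set F : Bool × ℕ → Ω → ℝ := fun p => if p.1 then X p.2 else Y p.2 with hF
  have hFX : ∀ i, F (true, i) = X i := fun i => rfl
  have hFY : ∀ i, F (false, i) = Y i := fun i => rfl
  have hmF : ∀ p, Measurable (F p) := by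
    rintro ⟨b, i⟩; cases b
    · exact hmY i
    · exact hmX i
  -- the combined variable
  set W : ℕ → Ω → ℝ := fun i ω => z * X i ω + (1 - z) * Y i ω with hW
  have hmW : ∀ i, Measurable (W i) := fun i =>
    ((hmX i).const_mul z).add ((hmY i).const_mul (1 - z))
  have hW2 : ∀ i, MemLp (W i) 2 μ := fun i =>
    ((hX2 i).const_mul z).add ((hY2 i).const_mul (1 - z))
  -- measurable map on pairs
  have hg : Measurable (fun q : ℝ × ℝ => z * q.1 + (1 - z) * q.2) := by fun_prop
  have hsq : Measurable (fun x : ℝ => x ^ 2) := by fun_prop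
  -- pairwise independence of the W i
  have hWindep : ∀ i j : ℕ, i ≠ j → IndepFun (W i) (W j) μ := by
    intro i j hij
    have h := hindep.indepFun_prodMk_prodMk hmF (true, i) (false, i) (true, j) (false, j)
      (by simp [hij]) (by simp) (by simp) (by simp [hij])
    exact h.comp hg hg
  have hWsq_indep : Pairwise (Function.onFun (IndepFun · · μ) fun i ω => (W i ω) ^ 2) :=
    fun i j hij => (hWindep i j hij).comp hsq hsq
  have hXsq_indep : Pairwise (Function.onFun (IndepFun · · μ) fun i ω => (X i ω) ^ 2) := by
    intro i j hij
    have h := hindep.indepFun (i := (true, i)) (j := (true, j)) (by simp [hij])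
    exact h.comp hsq hsq
  -- identical distribution of the pairs
  have hXYindep : ∀ i : ℕ, IndepFun (X i) (Y i) μ :=
    fun i => hindep.indepFun (i := (true, i)) (j := (false, i)) (by simp)
  have hmap : ∀ i : ℕ, μ.map (fun ω => (X i ω, Y i ω)) = (μ.map (X i)).prod (μ.map (Y i)) := by
    intro i
    exact (indepFun_iff_map_prod_eq_prod_map_map (hmX i).aemeasurable
      (hmY i).aemeasurable).1 (hXYindep i)
  have hpairident : ∀ i : ℕ,
      IdentDistrib (fun ω => (X i ω, Y i ω)) (fun ω => (X 0 ω, Y 0 ω)) μ μ := by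
    intro i
    refine ⟨((hmX i).prodMk (hmY i)).aemeasurable, ((hmX 0).prodMk (hmY 0)).aemeasurable, ?_⟩
    rw [hmap i, hmap 0, hXid i, hYid i]
  have hWsq_ident : ∀ i : ℕ,
      IdentDistrib (fun ω => (W i ω) ^ 2) (fun ω => (W 0 ω) ^ 2) μ μ := by
    intro i
    exact (hpairident i).comp
      (show Measurable fun q : ℝ × ℝ => (z * q.1 + (1 - z) * q.2) ^ 2 by fun_prop)
  have hXsq_ident : ∀ i : ℕ,
      IdentDistrib (fun ω => (X i ω) ^ 2) (fun ω => (X 0 ω) ^ 2) μ μ := by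
    intro i
    exact IdentDistrib.comp ⟨(hmX i).aemeasurable, (hmX 0).aemeasurable, hXid i⟩ hsq
  -- moments
  have hWint : Integrable (W 0) μ := (hW2 0).integrable one_le_two
  have hEW : ∫ ω, W 0 ω ∂μ = m := by
    rw [hW]
    rw [integral_add (((hX2 0).integrable one_le_two).const_mul z)
      (((hY2 0).integrable one_le_two).const_mul (1 - z)),
      integral_const_mul, integral_const_mul, hXm 0, hYm 0]
    ring
  have hVW : variance (W 0) μ = σ^2 * (z^2 + (1 - z)^2) := by
    have hI : IndepFun (fun ω => z * X 0 ω) (fun ω => (1 - z) * Y 0 ω) μ :=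
      (hXYindep 0).comp (measurable_id.const_mul z) (measurable_id.const_mul (1 - z))
    have : variance (W 0) μ
        = variance (fun ω => z * X 0 ω) μ + variance (fun ω => (1 - z) * Y 0 ω) μ := by
      have := IndepFun.variance_add ((hX2 0).const_mul z) ((hY2 0).const_mul (1 - z)) hI
      exact this
    rw [this, variance_const_mul, variance_const_mul, hXv 0, hYv 0]
    ring
  have hEW2 : ∫ ω, (W 0 ω) ^ 2 ∂μ = σ^2 * (z^2 + (1 - z)^2) + m^2 := by
    have h := variance_eq_sub (hW2 0)
    have hr : (μ[W 0 ^ 2]) = ∫ ω, (W 0 ω) ^ 2 ∂μ := by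
      apply integral_congr_ae; filter_upwards with ω; simp
    rw [hr, hVW, hEW] at h
    linarith
  have hEX2 : ∫ ω, (X 0 ω) ^ 2 ∂μ = σ^2 + m^2 := by
    have h := variance_eq_sub (hX2 0)
    have hr : (μ[X 0 ^ 2]) = ∫ ω, (X 0 ω) ^ 2 ∂μ := by
      apply integral_congr_ae; filter_upwards with ω; simp
    rw [hr, hXv 0, hXm 0] at h
    linarith
  -- strong law of large numbers
  have hA := strong_law_ae_real (fun i ω => (W i ω) ^ 2) ((hW2 0).integrable_sq)
    hWsq_indep hWsq_ident
  have hB := strong_law_ae_real (fun i ω => (X i ω) ^ 2) ((hX2 0).integrable_sq)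
    hXsq_indep hXsq_ident
  rw [show (μ[fun ω => (W 0 ω) ^ 2]) = σ^2 * (z^2 + (1 - z)^2) + m^2 from hEW2] at hA
  rw [show (μ[fun ω => (X 0 ω) ^ 2]) = σ^2 + m^2 from hEX2] at hB
  filter_upwards [hA, hB] with ω hAω hBω
  have hrw : ∀ n : ℕ, (((n : ℝ) - 1) * Real.log z
      - (1/2) * ∑ i ∈ Finset.range n, (z * X i ω + (1 - z) * Y i ω)^2
      + (1/2) * ∑ i ∈ Finset.range n, (X i ω)^2) / n
      = (((n : ℝ) - 1) / n) * Real.log z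
        - (1/2) * ((∑ i ∈ Finset.range n, (W i ω)^2) / n)
        + (1/2) * ((∑ i ∈ Finset.range n, (X i ω)^2) / n) := by
    intro n
    simp only [hW]
    ring
  have hone : Tendsto (fun n : ℕ => ((n : ℝ) - 1) / n) atTop (nhds 1) := by
    have h1 : Tendsto (fun n : ℕ => 1 - 1 / (n : ℝ)) atTop (nhds 1) := by
      simpa using tendsto_const_nhds.sub (tendsto_one_div_atTop_nhds_zero_nat (𝕜 := ℝ))
    apply h1.congr'
    filter_upwards [eventually_ge_atTop 1] with n hn
    have : (n : ℝ) ≠ 0 := Nat.cast_ne_zero.2 (by omega)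
    field_simp
  have := ((hone.mul_const (Real.log z)).sub (hAω.const_mul (1/2))).add
    (hBω.const_mul (1/2))
  have heq : Real.log z - σ^2 * z * (z - 1)
      = 1 * Real.log z - 1/2 * (σ^2 * (z^2 + (1 - z)^2) + m^2) + 1/2 * (σ^2 + m^2) := by
    ring
  rw [heq]
  exact (tendsto_congr hrw).2 this

lemma variance_congr_ae {Ω : Type*} [MeasurableSpace Ω] {μ : Measure Ω} {f g : Ω → ℝ}
    (h : f =ᵐ[μ] g) : variance f μ = variance g μ := by
  unfold ProbabilityTheory.variance ProbabilityTheory.evariance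
  rw [integral_congr_ae h]
  congr 1
  apply lintegral_congr_ae
  filter_upwards [h] with ω hω
  rw [hω]

/-- Under the same assumptions as the law of large numbers for the log acceptance ratio `h_n`,
the acceptance probability `p_n = min(1, exp h_n)` converges almost surely to `1` if
`f_σ(z) > 0` and to `0` if `f_σ(z) < 0`. -/
theorem acceptance_probability_limit {Ω : Type*} [MeasurableSpace Ω] (μ : Measure Ω)
    [IsProbabilityMeasure μ] (X Y : ℕ → Ω → ℝ) (m σ : ℝ) (z : ℝ) (hz : 0 < z)
    (hindep : iIndepFun
      (fun p : Bool × ℕ => if p.1 then X p.2 else Y p.2) μ)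
    (hXid : ∀ i, Measure.map (X i) μ = Measure.map (X 0) μ)
    (hYid : ∀ i, Measure.map (Y i) μ = Measure.map (Y 0) μ)
    (hX2 : ∀ i, MemLp (X i) 2 μ) (hY2 : ∀ i, MemLp (Y i) 2 μ)
    (hXm : ∀ i, ∫ ω, X i ω ∂μ = m) (hYm : ∀ i, ∫ ω, Y i ω ∂μ = m)
    (hXv : ∀ i, variance (X i) μ = σ^2) (hYv : ∀ i, variance (Y i) μ = σ^2) :
    (0 < Real.log z - σ^2 * z * (z - 1) →
      ∀ᵐ ω ∂μ, Tendsto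
        (fun n : ℕ => min 1 (Real.exp
          (((n : ℝ) - 1) * Real.log z
            - (1/2) * ∑ i ∈ Finset.range n, (z * X i ω + (1 - z) * Y i ω)^2
            + (1/2) * ∑ i ∈ Finset.range n, (X i ω)^2)))
        atTop (nhds 1)) ∧
    (Real.log z - σ^2 * z * (z - 1) < 0 →
      ∀ᵐ ω ∂μ, Tendsto
        (fun n : ℕ => min 1 (Real.exp
          (((n : ℝ) - 1) * Real.log z
            - (1/2) * ∑ i ∈ Finset.range n, (z * X i ω + (1 - z) * Y i ω)^2
            + (1/2) * ∑ i ∈ Finset.range n, (X i ω)^2)))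
        atTop (nhds 0)) := by
  classical
  -- measurable modifications
  set X' : ℕ → Ω → ℝ := fun i => ((hX2 i).aestronglyMeasurable.aemeasurable).mk (X i) with hX'
  set Y' : ℕ → Ω → ℝ := fun i => ((hY2 i).aestronglyMeasurable.aemeasurable).mk (Y i) with hY'
  have hmX' : ∀ i, Measurable (X' i) := fun i => AEMeasurable.measurable_mk _
  have hmY' : ∀ i, Measurable (Y' i) := fun i => AEMeasurable.measurable_mk _
  have haeX : ∀ i, X i =ᵐ[μ] X' i := fun i => AEMeasurable.ae_eq_mk _
  have haeY : ∀ i, Y i =ᵐ[μ] Y' i := fun i => AEMeasurable.ae_eq_mk _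
  have hindep' : iIndepFun
      (fun p : Bool × ℕ => if p.1 then X' p.2 else Y' p.2) μ := by
    apply iIndepFun_ae_eq' hindep
    rintro ⟨b, i⟩
    cases b
    · exact haeY i
    · exact haeX i
  have hXid' : ∀ i, Measure.map (X' i) μ = Measure.map (X' 0) μ := by
    intro i
    rw [← Measure.map_congr (haeX i), ← Measure.map_congr (haeX 0)]
    exact hXid i
  have hYid' : ∀ i, Measure.map (Y' i) μ = Measure.map (Y' 0) μ := by
    intro i
    rw [← Measure.map_congr (haeY i), ← Measure.map_congr (haeY 0)]
    exact hYid i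
  have hX2' : ∀ i, MemLp (X' i) 2 μ := fun i => (hX2 i).ae_eq (haeX i)
  have hY2' : ∀ i, MemLp (Y' i) 2 μ := fun i => (hY2 i).ae_eq (haeY i)
  have hXm' : ∀ i, ∫ ω, X' i ω ∂μ = m := fun i => by
    rw [← integral_congr_ae (haeX i)]; exact hXm i
  have hYm' : ∀ i, ∫ ω, Y' i ω ∂μ = m := fun i => by
    rw [← integral_congr_ae (haeY i)]; exact hYm i
  have hXv' : ∀ i, variance (X' i) μ = σ^2 := fun i => by
    rw [← variance_congr_ae (haeX i)]; exact hXv i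
  have hYv' : ∀ i, variance (Y' i) μ = σ^2 := fun i => by
    rw [← variance_congr_ae (haeY i)]; exact hYv i
  have hconv' := ratio_limit_meas μ X' Y' m σ z hmX' hmY' hindep' hXid' hYid' hX2' hY2'
    hXm' hYm' hXv' hYv'
  have hae : ∀ᵐ ω ∂μ, ∀ i, X i ω = X' i ω ∧ Y i ω = Y' i ω := by
    rw [ae_all_iff]
    intro i
    filter_upwards [haeX i, haeY i] with ω h1 h2
    exact ⟨h1, h2⟩
  have hconv : ∀ᵐ ω ∂μ, Tendsto
      (fun n : ℕ => (((n : ℝ) - 1) * Real.log z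
            - (1/2) * ∑ i ∈ Finset.range n, (z * X i ω + (1 - z) * Y i ω)^2
            + (1/2) * ∑ i ∈ Finset.range n, (X i ω)^2) / n)
      atTop (nhds (Real.log z - σ^2 * z * (z - 1))) := by
    filter_upwards [hconv', hae] with ω h1 h2
    refine Tendsto.congr (fun n => ?_) h1
    have e1 : ∑ i ∈ Finset.range n, (z * X' i ω + (1 - z) * Y' i ω)^2
        = ∑ i ∈ Finset.range n, (z * X i ω + (1 - z) * Y i ω)^2 :=
      Finset.sum_congr rfl fun i _ => by rw [(h2 i).1, (h2 i).2]
    have e2 : ∑ i ∈ Finset.range n, (X' i ω)^2 = ∑ i ∈ Finset.range n, (X i ω)^2 :=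
      Finset.sum_congr rfl fun i _ => by rw [(h2 i).1]
    rw [e1, e2]
  constructor
  · intro hsign
    filter_upwards [hconv] with ω hω
    exact det_min_one hsign hω
  · intro hsign
    filter_upwards [hconv] with ω hω
    exact det_min_zero hsign hω
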